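/- Let S, L : ℝ^n →L[ℝ] ℝ^n with S skew-adjoint and L symmetric, and let r : ℝ → ℝ, z : ℝ → ℝ^n, g : ℝ → ℝ^n be differentiable with z'(t) = S(L(z t) + r t • g t) and r'(t) = (1/2) * ⟪g t, z'(t)⟫ for all t. Then t ↦ (1/2)⟪z t, L(z t)⟫ + (r t)^2 is constant. -/

import Mathlib

open scoped RealInnerProductSpace

/-- Modified-energy conservation of the SAV reformulation. -/
theorem stmt3 {n : ℕ}
    (S L : EuclideanSpace ℝ (Fin n) →L[ℝ] EuclideanSpace ℝ (Fin n))
    (hS : ∀ x y, ⟪S x, y⟫ = -⟪x, S y⟫)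
    (hL : ∀ x y, ⟪L x, y⟫ = ⟪x, L y⟫)
    (r r' : ℝ → ℝ) (z z' g : ℝ → EuclideanSpace ℝ (Fin n))
    (hz : ∀ t, HasDerivAt z (z' t) t)
    (hr : ∀ t, HasDerivAt r (r' t) t)
    (heqz : ∀ t, z' t = S (L (z t) + r t • g t))
    (heqr : ∀ t, r' t = (1 / 2 : ℝ) * ⟪g t, z' t⟫) :
    ∀ t₁ t₂, (1 / 2 : ℝ) * ⟪z t₁, L (z t₁)⟫ + (r t₁) ^ 2
      = (1 / 2 : ℝ) * ⟪z t₂, L (z t₂)⟫ + (r t₂) ^ 2 := by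
  set E : ℝ → ℝ := fun t => (1 / 2 : ℝ) * ⟪z t, L (z t)⟫ + (r t) ^ 2 with hE
  have key : ∀ t, HasDerivAt E 0 t := by
    intro t
    have hLz : HasDerivAt (fun t => L (z t)) (L (z' t)) t :=
      (L.hasFDerivAt.comp_hasDerivAt t (hz t))
    have hinner : HasDerivAt (fun t => ⟪z t, L (z t)⟫)
        (⟪z t, L (z' t)⟫ + ⟪z' t, L (z t)⟫) t := (hz t).inner ℝ hLz
    have hsq : HasDerivAt (fun t => (r t) ^ 2) (2 * r t * r' t) t := by
      simpa [mul_comm, mul_assoc] using (hr t).fun_pow 2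
    have h := (hinner.const_mul (1 / 2 : ℝ)).add hsq
    have hzL : ⟪z t, L (z' t)⟫ = ⟪L (z t), z' t⟫ := by
      rw [real_inner_comm, hL, real_inner_comm]
    have hzL2 : ⟪z' t, L (z t)⟫ = ⟪L (z t), z' t⟫ := real_inner_comm _ _
    have hval : (1 / 2 : ℝ) * (⟪z t, L (z' t)⟫ + ⟪z' t, L (z t)⟫)
        + 2 * r t * r' t = 0 := by
      rw [hzL, hzL2, heqr t]
      have : ⟪L (z t), z' t⟫ + r t * ⟪g t, z' t⟫
          = ⟪L (z t) + r t • g t, z' t⟫ := by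
        rw [inner_add_left, real_inner_smul_left]
      have hskew : ⟪L (z t) + r t • g t, z' t⟫ = 0 := by
        rw [heqz t]
        have := hS (L (z t) + r t • g t) (L (z t) + r t • g t)
        rw [real_inner_comm] at this
        linarith
      nlinarith [this, hskew]
    exact hval ▸ h
  intro t₁ t₂
  have : E t₁ = E t₂ := by
    have hconst := is_const_of_deriv_eq_zero (f := E)
      (fun t => (key t).differentiableAt) (fun t => (key t).deriv)
    exact hconst t₁ t₂
  simpa [hE] using this
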